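/- For fixed m > 0 and β ≥ 2, the real part of the dispersion relation Re λ(σ) = m(−2cos 2σ + (4+2β)cos σ − (2+2β)) is nonpositive for all σ ∈ ℝ; moreover, if β > 2 then Re λ(σ) < 0 for all σ with cos σ ≠ 1. -/
import Mathlib

/-- For supercritical bias `β ≥ 2`, the real part of the dispersion relation of
the biased bounded confidence model at the uniform state `m > 0` is nonpositive,
and strictly negative for `β > 2` whenever `cos σ ≠ 1`. -/
theorem dispersion_nonpositive_supercritical (m β : ℝ) (hm : 0 < m) (hβ : 2 ≤ β) :
    (∀ σ : ℝ,
      m * (-2 * Real.cos (2 * σ) + (4 + 2 * β) * Real.cos σ - (2 + 2 * β)) ≤ 0) ∧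
    (2 < β → ∀ σ : ℝ, Real.cos σ ≠ 1 →
      m * (-2 * Real.cos (2 * σ) + (4 + 2 * β) * Real.cos σ - (2 + 2 * β)) < 0) := by
  constructor
  · intro σ
    have h2 : Real.cos (2 * σ) = 2 * Real.cos σ ^ 2 - 1 := Real.cos_two_mul σ
    have hc : Real.cos σ ≤ 1 := Real.cos_le_one σ
    rw [h2]
    nlinarith [mul_nonneg (sub_nonneg.2 hβ) (sub_nonneg.2 hc),
      mul_nonneg (sub_nonneg.2 hc) (sub_nonneg.2 hc), hm.le]
  · intro hβ' σ hne
    have h2 : Real.cos (2 * σ) = 2 * Real.cos σ ^ 2 - 1 := Real.cos_two_mul σ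
    have hc : Real.cos σ < 1 := lt_of_le_of_ne (Real.cos_le_one σ) hne
    rw [h2]
    nlinarith [mul_pos (sub_pos.2 hβ') (sub_pos.2 hc),
      mul_pos (sub_pos.2 hc) (sub_pos.2 hc)]
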